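/- Let f be the Collatz map, H a complex Hilbert space with orthonormal basis {e_n}_{n≥1}, and T1, T2 the bounded operators with T1 e_n = e_{3n+1} for n odd, T1 e_n = 0 for n even, T2 e_n = e_{n/2} for n even, T2 e_n = 0 for n odd. Then for every n ≥ 1, the closure of C*(T1,T2)·e_n equals the closed linear span of {e_m : m ∈ ℕ≥1, m ~ n}, where ~ is the orbit equivalence relation induced by f. -/

import Mathlib

/-- The Collatz map on positive integers: `3n+1` for odd `n`, `n/2` for even `n`. -/
def collatz (n : ℕ+) : ℕ+ :=
  if h : (n : ℕ) % 2 = 1 then 3 * n + 1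
  else ⟨(n : ℕ) / 2, by
    have h2 : 0 < n.1 := n.2
    have h3 : ¬ n.1 % 2 = 1 := h
    show 0 < n.1 / 2
    omega⟩

/-- The forward orbit of `x` under `f`. -/
def orbit {X : Type*} (f : X → X) (x : X) : Set X := Set.range fun k => f^[k] x

/-- The orbit equivalence relation induced by `f`: `x ~ y` iff the orbits meet. -/
def orbEquiv {X : Type*} (f : X → X) (x y : X) : Prop :=
  (orbit f x ∩ orbit f y).Nonempty

/-- The C*-algebra of operators generated by a set `S` of bounded operators on a complex
Hilbert space: the closure of the (non-unital) star subalgebra generated by `S`. -/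
noncomputable def CstarGen {H : Type*} [NormedAddCommGroup H] [InnerProductSpace ℂ H]
    [CompleteSpace H] (S : Set (H →L[ℂ] H)) : Set (H →L[ℂ] H) :=
  closure (NonUnitalStarAlgebra.adjoin ℂ S : Set (H →L[ℂ] H))

open scoped InnerProductSpace

theorem orbEquiv_refl' {X : Type*} (f : X → X) (x : X) : orbEquiv f x x :=
  ⟨x, ⟨0, rfl⟩, ⟨0, rfl⟩⟩

theorem orbEquiv_symm' {X : Type*} {f : X → X} {x y : X} (h : orbEquiv f x y) :
    orbEquiv f y x := by
  obtain ⟨p, h1, h2⟩ := h; exact ⟨p, h2, h1⟩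

theorem orbEquiv_trans' {X : Type*} {f : X → X} {x y z : X} (h : orbEquiv f x y)
    (h' : orbEquiv f y z) : orbEquiv f x z := by
  obtain ⟨p, ⟨a, ha⟩, ⟨c, hc⟩⟩ := h
  obtain ⟨q, ⟨d, hd⟩, ⟨e, he⟩⟩ := h'
  simp only [] at ha hc hd he
  refine ⟨f^[d] p, ⟨d + a, ?_⟩, ⟨c + e, ?_⟩⟩
  · show f^[d + a] x = f^[d] p
    rw [Function.iterate_add_apply, ha]
  · show f^[c + e] z = f^[d] p
    rw [Function.iterate_add_apply, he, ← hd, ← Function.iterate_add_apply,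
      Nat.add_comm, Function.iterate_add_apply, hc]

theorem orbEquiv_step' {X : Type*} (f : X → X) (x : X) : orbEquiv f (f x) x :=
  ⟨f x, ⟨0, rfl⟩, ⟨1, rfl⟩⟩

theorem collatz_odd {m : ℕ+} (h : (m : ℕ) % 2 = 1) : collatz m = 3 * m + 1 := dif_pos h

theorem collatz_coe_even {m : ℕ+} (h : (m : ℕ) % 2 = 0) : ((collatz m : ℕ+) : ℕ) = (m : ℕ) / 2 := by
  have e : collatz m = ⟨(m : ℕ) / 2, by
    have h2 : 0 < m.1 := m.2
    have h3 : m.1 % 2 = 0 := h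
    show 0 < m.1 / 2
    omega⟩ := dif_neg (by omega)
  rw [e]; rfl

theorem pnat_two_mul_coe (m : ℕ+) : ((2 * m : ℕ+) : ℕ) = 2 * (m : ℕ) := by
  simp [PNat.mul_coe]

theorem collatz_two_mul (m : ℕ+) : collatz (2 * m) = m := by
  have h : ((2 * m : ℕ+) : ℕ) % 2 = 0 := by rw [pnat_two_mul_coe]; omega
  apply PNat.coe_injective
  rw [collatz_coe_even h, pnat_two_mul_coe]
  omega

theorem two_mul_collatz {m : ℕ+} (h : (m : ℕ) % 2 = 0) : 2 * collatz m = m := by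
  apply PNat.coe_injective
  rw [pnat_two_mul_coe, collatz_coe_even h]
  have := m.2
  omega

theorem pnat_three_coe (m : ℕ+) : ((3 * m + 1 : ℕ+) : ℕ) = 3 * (m : ℕ) + 1 := by
  simp [PNat.mul_coe, PNat.add_coe]

/-- For every `n`, the closure of `C*(T₁,T₂)·eₙ` equals the closed linear span of
`{eₘ : m ~ n}`, where `~` is the orbit equivalence relation induced by the Collatz map. -/
theorem cstar_pair_orbit_span {H : Type*} [NormedAddCommGroup H] [InnerProductSpace ℂ H]
    [CompleteSpace H] (b : HilbertBasis ℕ+ ℂ H)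
    (T1 T2 : H →L[ℂ] H)
    (hT1 : ∀ n : ℕ+, T1 (b n) = if (n : ℕ) % 2 = 1 then b (3 * n + 1) else 0)
    (hT2 : ∀ n : ℕ+, T2 (b n) = if (n : ℕ) % 2 = 0 then b (collatz n) else 0)
    (n : ℕ+) :
    closure ((fun A => A (b n)) '' CstarGen {T1, T2}) =
      closure ((Submodule.span ℂ (b '' {m : ℕ+ | orbEquiv collatz m n}) : Submodule ℂ H) : Set H) := by
  classical
  set M : Set ℕ+ := {m : ℕ+ | orbEquiv collatz m n} with hMdef
  set V : Submodule ℂ H := (Submodule.span ℂ (b '' M)).topologicalClosure with hVdef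
  have hVcoe : (V : Set H) = closure ((Submodule.span ℂ (b '' M) : Submodule ℂ H) : Set H) := rfl
  have hVclosed : IsClosed (V : Set H) := Submodule.isClosed_topologicalClosure _
  have hI : ∀ i j : ℕ+, ⟪b i, b j⟫_ℂ = if i = j then 1 else 0 :=
    orthonormal_iff_ite.mp b.orthonormal
  have hext : ∀ x y : H, (∀ i, ⟪b i, x⟫_ℂ = ⟪b i, y⟫_ℂ) → x = y := by
    intro x y h
    apply b.repr.injective
    ext i
    rw [b.repr_apply_apply, b.repr_apply_apply, h i]
  -- adjoint formulas
  have hT1s : ∀ k m : ℕ+, (k : ℕ) % 2 = 1 → 3 * k + 1 = m → star T1 (b m) = b k := by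
    intro k m hk hkm
    rw [ContinuousLinearMap.star_eq_adjoint]
    apply hext
    intro j
    rw [ContinuousLinearMap.adjoint_inner_right, hT1 j]
    by_cases hj : (j : ℕ) % 2 = 1
    · rw [if_pos hj, hI, hI]
      by_cases hjk : j = k
      · subst hjk
        rw [if_pos hkm, if_pos rfl]
      · rw [if_neg hjk, if_neg]
        intro h
        apply hjk
        have hc : ((3 * j + 1 : ℕ+) : ℕ) = ((3 * k + 1 : ℕ+) : ℕ) := by rw [h, hkm]
        rw [pnat_three_coe, pnat_three_coe] at hc
        exact PNat.coe_injective (by omega)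
    · rw [if_neg hj, inner_zero_left, hI, if_neg]
      intro h
      subst h
      exact hj hk
  have hT1s0 : ∀ m : ℕ+, (∀ k : ℕ+, (k : ℕ) % 2 = 1 → 3 * k + 1 ≠ m) → star T1 (b m) = 0 := by
    intro m hm
    rw [ContinuousLinearMap.star_eq_adjoint]
    apply hext
    intro j
    rw [ContinuousLinearMap.adjoint_inner_right, hT1 j, inner_zero_right]
    by_cases hj : (j : ℕ) % 2 = 1
    · rw [if_pos hj, hI, if_neg (hm j hj)]
    · rw [if_neg hj, inner_zero_left]
  have hT2s : ∀ m : ℕ+, star T2 (b m) = b (2 * m) := by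
    intro m
    rw [ContinuousLinearMap.star_eq_adjoint]
    apply hext
    intro j
    rw [ContinuousLinearMap.adjoint_inner_right, hT2 j]
    by_cases hj : (j : ℕ) % 2 = 0
    · rw [if_pos hj, hI, hI]
      by_cases hjm : j = 2 * m
      · subst hjm
        rw [if_pos (collatz_two_mul m), if_pos rfl]
      · rw [if_neg hjm, if_neg]
        intro h
        apply hjm
        rw [← h, two_mul_collatz hj]
    · rw [if_neg hj, inner_zero_left, hI, if_neg]
      intro h
      subst h
      rw [pnat_two_mul_coe] at hj
      omega
  -- membership lemmas for M
  have hMn : n ∈ M := orbEquiv_refl' collatz n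
  have hMcol : ∀ m ∈ M, collatz m ∈ M := fun m hm =>
    orbEquiv_trans' (orbEquiv_step' collatz m) hm
  have hMpre : ∀ k m : ℕ+, m ∈ M → collatz k = m → k ∈ M := by
    intro k m hm hk
    have h1 : orbEquiv collatz (collatz k) k := orbEquiv_step' collatz k
    rw [hk] at h1
    exact orbEquiv_trans' (orbEquiv_symm' h1) hm
  have hbm : ∀ m ∈ M, b m ∈ V := fun m hm =>
    Submodule.le_topologicalClosure _ (Submodule.subset_span ⟨m, hm, rfl⟩)
  -- generators map basis vectors of V into V
  have hT1V : ∀ m ∈ M, T1 (b m) ∈ V := by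
    intro m hm
    rw [hT1 m]
    split_ifs with h
    · have : collatz m = 3 * m + 1 := collatz_odd h
      rw [← this]
      exact hbm _ (hMcol m hm)
    · exact V.zero_mem
  have hT2V : ∀ m ∈ M, T2 (b m) ∈ V := by
    intro m hm
    rw [hT2 m]
    split_ifs with h
    · exact hbm _ (hMcol m hm)
    · exact V.zero_mem
  have hT1sV : ∀ m ∈ M, star T1 (b m) ∈ V := by
    intro m hm
    by_cases hex : ∃ k : ℕ+, (k : ℕ) % 2 = 1 ∧ 3 * k + 1 = m
    · obtain ⟨k, hk1, hk2⟩ := hex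
      rw [hT1s k m hk1 hk2]
      refine hbm _ (hMpre k m hm ?_)
      rw [collatz_odd hk1, hk2]
    · push_neg at hex
      rw [hT1s0 m hex]
      exact V.zero_mem
  have hT2sV : ∀ m ∈ M, star T2 (b m) ∈ V := by
    intro m hm
    rw [hT2s m]
    exact hbm _ (hMpre _ _ hm (collatz_two_mul m))
  -- extend to all of V
  have mapsV : ∀ A : H →L[ℂ] H, (∀ m ∈ M, A (b m) ∈ V) → ∀ x ∈ V, A x ∈ V := by
    intro A hA x hx
    have h1 : (A : H →ₗ[ℂ] H) '' (Submodule.span ℂ (b '' M) : Set H) ⊆ (V : Set H) := by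
      rintro _ ⟨y, hy, rfl⟩
      have hle : Submodule.span ℂ (b '' M) ≤ V.comap (A : H →ₗ[ℂ] H) := by
        rw [Submodule.span_le]
        rintro _ ⟨m, hm, rfl⟩
        exact hA m hm
      exact hle hy
    have hx' : x ∈ closure ((Submodule.span ℂ (b '' M) : Submodule ℂ H) : Set H) := hx
    have h2 : A x ∈ closure ((A : H →ₗ[ℂ] H) '' (Submodule.span ℂ (b '' M) : Set H)) :=
      image_closure_subset_closure_image A.continuous ⟨x, hx', rfl⟩
    exact closure_minimal h1 hVclosed h2
  -- invariance for everything in the adjoin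
  have key : ∀ A ∈ NonUnitalStarAlgebra.adjoin ℂ ({T1, T2} : Set (H →L[ℂ] H)),
      (∀ x ∈ V, A x ∈ V) ∧ (∀ x ∈ V, star A x ∈ V) := by
    intro A hA
    induction hA using NonUnitalStarAlgebra.adjoin_induction with
    | mem x hx =>
      simp only [Set.mem_insert_iff, Set.mem_singleton_iff] at hx
      rcases hx with rfl | rfl
      · exact ⟨mapsV _ hT1V, mapsV _ hT1sV⟩
      · exact ⟨mapsV _ hT2V, mapsV _ hT2sV⟩
    | add x y hx hy ihx ihy =>
      constructor
      · intro z hz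
        rw [ContinuousLinearMap.add_apply]
        exact V.add_mem (ihx.1 z hz) (ihy.1 z hz)
      · intro z hz
        rw [star_add, ContinuousLinearMap.add_apply]
        exact V.add_mem (ihx.2 z hz) (ihy.2 z hz)
    | zero =>
      constructor
      · intro z hz; rw [ContinuousLinearMap.zero_apply]; exact V.zero_mem
      · intro z hz; rw [star_zero, ContinuousLinearMap.zero_apply]; exact V.zero_mem
    | mul x y hx hy ihx ihy =>
      constructor
      · intro z hz
        rw [ContinuousLinearMap.mul_apply]
        exact ihx.1 _ (ihy.1 z hz)
      · intro z hz
        rw [star_mul, ContinuousLinearMap.mul_apply]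
        exact ihy.2 _ (ihx.2 z hz)
    | smul r x hx ihx =>
      constructor
      · intro z hz
        rw [ContinuousLinearMap.smul_apply]
        exact V.smul_mem _ (ihx.1 z hz)
      · intro z hz
        rw [star_smul, ContinuousLinearMap.smul_apply]
        exact V.smul_mem _ (ihx.2 z hz)
    | star x hx ihx =>
      refine ⟨ihx.2, ?_⟩
      intro z hz
      rw [star_star]
      exact ihx.1 z hz
  -- constructing operators realizing orbit moves
  have hT1mem : T1 ∈ NonUnitalStarAlgebra.adjoin ℂ ({T1, T2} : Set (H →L[ℂ] H)) :=
    NonUnitalStarAlgebra.subset_adjoin ℂ _ (by simp)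
  have hT2mem : T2 ∈ NonUnitalStarAlgebra.adjoin ℂ ({T1, T2} : Set (H →L[ℂ] H)) :=
    NonUnitalStarAlgebra.subset_adjoin ℂ _ (by simp)
  have hstep : ∀ m : ℕ+, (T1 + T2) (b m) = b (collatz m) := by
    intro m
    rw [ContinuousLinearMap.add_apply, hT1 m, hT2 m]
    rcases Nat.even_or_odd' (m : ℕ) with ⟨k, hk | hk⟩
    · rw [if_neg (by omega), if_pos (by omega), zero_add]
    · rw [if_pos (by omega), if_neg (by omega), add_zero, collatz_odd (by omega)]
  have hA0 : ∀ m : ℕ+, (star T1 * T1 + star T2 * T2) (b m) = b m := by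
    intro m
    rw [ContinuousLinearMap.add_apply, ContinuousLinearMap.mul_apply,
      ContinuousLinearMap.mul_apply, hT1 m, hT2 m]
    rcases Nat.even_or_odd' (m : ℕ) with ⟨k, hk | hk⟩
    · rw [if_neg (by omega), if_pos (by omega), map_zero, zero_add, hT2s,
        two_mul_collatz (by omega)]
    · rw [if_pos (by omega), if_neg (by omega), map_zero, add_zero,
        hT1s m (3 * m + 1) (by omega) rfl]
  have hA0mem : (star T1 * T1 + star T2 * T2) ∈
      NonUnitalStarAlgebra.adjoin ℂ ({T1, T2} : Set (H →L[ℂ] H)) :=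
    add_mem (mul_mem (star_mem hT1mem) hT1mem) (mul_mem (star_mem hT2mem) hT2mem)
  have hfwd : ∀ (k : ℕ) (m : ℕ+), ∃ A ∈ NonUnitalStarAlgebra.adjoin ℂ
      ({T1, T2} : Set (H →L[ℂ] H)), A (b m) = b (collatz^[k] m) := by
    intro k
    induction k with
    | zero => exact fun m => ⟨_, hA0mem, hA0 m⟩
    | succ k ih =>
      intro m
      obtain ⟨A, hAmem, hA⟩ := ih m
      refine ⟨(T1 + T2) * A, mul_mem (add_mem hT1mem hT2mem) hAmem, ?_⟩
      rw [ContinuousLinearMap.mul_apply, hA, hstep, Function.iterate_succ_apply']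
  have hback : ∀ (j : ℕ) (m : ℕ+), ∃ A ∈ NonUnitalStarAlgebra.adjoin ℂ
      ({T1, T2} : Set (H →L[ℂ] H)), A (b (collatz^[j] m)) = b m := by
    intro j
    induction j with
    | zero => exact fun m => ⟨_, hA0mem, hA0 m⟩
    | succ j ih =>
      intro m
      obtain ⟨A, hAmem, hA⟩ := ih (collatz m)
      rcases Nat.even_or_odd' (m : ℕ) with ⟨k, hk | hk⟩
      · refine ⟨star T2 * A, mul_mem (star_mem hT2mem) hAmem, ?_⟩
        rw [Function.iterate_succ_apply, ContinuousLinearMap.mul_apply, hA, hT2s,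
          two_mul_collatz (by omega)]
      · refine ⟨star T1 * A, mul_mem (star_mem hT1mem) hAmem, ?_⟩
        rw [Function.iterate_succ_apply, ContinuousLinearMap.mul_apply, hA,
          hT1s m (collatz m) (by omega) (collatz_odd (by omega)).symm]
  have hreach : ∀ m ∈ M, ∃ A ∈ NonUnitalStarAlgebra.adjoin ℂ
      ({T1, T2} : Set (H →L[ℂ] H)), A (b n) = b m := by
    intro m hm
    obtain ⟨p, ⟨j, hj⟩, ⟨k, hk⟩⟩ := hm
    simp only [] at hj hk
    obtain ⟨F, hFmem, hF⟩ := hfwd k n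
    obtain ⟨B, hBmem, hB⟩ := hback j m
    refine ⟨B * F, mul_mem hBmem hFmem, ?_⟩
    rw [ContinuousLinearMap.mul_apply, hF, hk, ← hj, hB]
  -- the two inclusions
  have hcont : Continuous (fun A : H →L[ℂ] H => A (b n)) :=
    (ContinuousLinearMap.apply ℂ H (b n)).continuous
  apply Set.Subset.antisymm
  · rw [← hVcoe]
    apply closure_minimal _ hVclosed
    rintro _ ⟨A, hA, rfl⟩
    have h1 : (fun A : H →L[ℂ] H => A (b n)) ''
        (NonUnitalStarAlgebra.adjoin ℂ ({T1, T2} : Set (H →L[ℂ] H)) : Set (H →L[ℂ] H))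
        ⊆ (V : Set H) := by
      rintro _ ⟨B, hB, rfl⟩
      exact (key B hB).1 (b n) (hbm n hMn)
    have h2 : A (b n) ∈ closure ((fun A : H →L[ℂ] H => A (b n)) ''
        (NonUnitalStarAlgebra.adjoin ℂ ({T1, T2} : Set (H →L[ℂ] H)) : Set (H →L[ℂ] H))) :=
      image_closure_subset_closure_image hcont ⟨A, hA, rfl⟩
    exact closure_minimal h1 hVclosed h2
  · apply closure_mono
    rintro _ hx
    have hle : Submodule.span ℂ (b '' M) ≤
        Submodule.map ((ContinuousLinearMap.apply ℂ H (b n)) : (H →L[ℂ] H) →ₗ[ℂ] H)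
          (NonUnitalStarAlgebra.adjoin ℂ ({T1, T2} : Set (H →L[ℂ] H))).toSubmodule := by
      rw [Submodule.span_le]
      rintro _ ⟨m, hm, rfl⟩
      obtain ⟨A, hAmem, hA⟩ := hreach m hm
      exact ⟨A, hAmem, hA⟩
    obtain ⟨A, hAmem, hA⟩ := hle hx
    exact ⟨A, subset_closure hAmem, hA⟩
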